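/- arXiv:1508.07789 — 2 statements merged into one kernel-verified Lean document; each statement's English description precedes it below -/
import Mathlib

section
/- Let (E, M) be an orthogonal factorisation system on a category C with terminal object 1, and suppose E satisfies the 2-out-of-3 property (if any two of f, g, g∘f lie in E, so does the third). Then a morphism f : a → b lies in E if and only if for every object x such that the unique map x → 1 lies in M, the precomposition map Hom(b, x) → Hom(a, x) is a bijection. -/
open CategoryTheory

universe v u

/-- `e` is left orthogonal to `m`: every commutative square from `e` to `m`
has a unique diagonal filler. -/
def Orthogonal {C : Type u} [Category.{v} C] {a b c d : C}
    (e : a ⟶ b) (m : c ⟶ d) : Prop :=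
  ∀ (f : a ⟶ c) (g : b ⟶ d), e ≫ g = f ≫ m →
    ∃! h : b ⟶ c, e ≫ h = f ∧ h ≫ m = g

/-- An orthogonal factorisation system on `C`. -/
structure OFS (C : Type u) [Category.{v} C] where
  E : MorphismProperty C
  M : MorphismProperty C
  factor : ∀ {a b : C} (f : a ⟶ b),
    ∃ (c : C) (e : a ⟶ c) (m : c ⟶ b), E e ∧ M m ∧ e ≫ m = f
  E_iff : ∀ {a b : C} (e : a ⟶ b),
    E e ↔ ∀ {c d : C} (m : c ⟶ d), M m → Orthogonal e m
  M_iff : ∀ {c d : C} (m : c ⟶ d),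
    M m ↔ ∀ {a b : C} (e : a ⟶ b), E e → Orthogonal e m

/-- Isomorphisms lie in `E`. -/
lemma OFS.iso_mem_E {C : Type u} [Category.{v} C] (S : OFS C) {a b : C}
    (e : a ⟶ b) [IsIso e] : S.E e := by
  rw [S.E_iff]
  intro c d m _ f g hcomm
  refine ⟨inv e ≫ f, ⟨by simp, ?_⟩, ?_⟩
  · rw [Category.assoc, ← hcomm, IsIso.inv_hom_id_assoc]
  · rintro h ⟨h1, _⟩
    rw [← h1, IsIso.inv_hom_id_assoc]

/-- Maps in `E` induce bijections on homs into objects whose map to the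
terminal object is in `M`. -/
lemma OFS.E_bij {C : Type u} [Category.{v} C] [Limits.HasTerminal C] (S : OFS C)
    {a b : C} (f : a ⟶ b) (hf : S.E f) (x : C)
    (hx : S.M (Limits.terminal.from x)) :
    Function.Bijective (fun g : b ⟶ x => f ≫ g) := by
  have horth := (S.E_iff f).mp hf (Limits.terminal.from x) hx
  constructor
  · intro g₁ g₂ hg
    simp only at hg
    obtain ⟨h, _, huniq⟩ := horth (f ≫ g₁) (Limits.terminal.from b)
      (Limits.terminal.hom_ext _ _)
    rw [huniq g₁ ⟨rfl, Limits.terminal.hom_ext _ _⟩,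
      huniq g₂ ⟨hg.symm, Limits.terminal.hom_ext _ _⟩]
  · intro g
    obtain ⟨h, ⟨hh, _⟩, _⟩ := horth g (Limits.terminal.from b)
      (Limits.terminal.hom_ext _ _)
    exact ⟨h, hh⟩

theorem stmt6 {C : Type u} [Category.{v} C] [Limits.HasTerminal C] (S : OFS C)
    (h23 : ∀ {a b c : C} (f : a ⟶ b) (g : b ⟶ c),
      (S.E f → S.E g → S.E (f ≫ g)) ∧
      (S.E f → S.E (f ≫ g) → S.E g) ∧
      (S.E g → S.E (f ≫ g) → S.E f))
    {a b : C} (f : a ⟶ b) :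
    S.E f ↔ ∀ x : C, S.M (Limits.terminal.from x) →
      Function.Bijective (fun g : b ⟶ x => f ≫ g) := by
  constructor
  · intro hf x hx
    exact S.E_bij f hf x hx
  · intro hbij
    obtain ⟨c, e, m, hE, hM, hfac⟩ := S.factor f
    -- `m` also induces bijections
    have hm_bij : ∀ x : C, S.M (Limits.terminal.from x) →
        Function.Bijective (fun g : b ⟶ x => m ≫ g) := by
      intro x hx
      have h1 := hbij x hx
      have h2 := S.E_bij e hE x hx
      have hcomp : (fun g : c ⟶ x => e ≫ g) ∘ (fun g : b ⟶ x => m ≫ g)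
          = fun g : b ⟶ x => f ≫ g := by
        funext g; simp [← hfac]
      rw [← hcomp] at h1
      exact (Function.Bijective.of_comp_iff' h2 _).mp h1
    -- factor the maps to the terminal object
    obtain ⟨d, e₁, m₁, hE₁, hM₁, h₁⟩ := S.factor (Limits.terminal.from c)
    obtain ⟨d₂, e₂, m₂, hE₂, hM₂, h₂⟩ := S.factor (Limits.terminal.from b)
    have hM₁' : S.M (Limits.terminal.from d) := by
      rwa [Limits.terminal.hom_ext (Limits.terminal.from d) m₁]
    have hM₂' : S.M (Limits.terminal.from d₂) := by
      rwa [Limits.terminal.hom_ext (Limits.terminal.from d₂) m₂]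
    -- s : b ⟶ d with m ≫ s = e₁
    obtain ⟨s, hs⟩ := (hm_bij d hM₁').2 e₁
    simp only at hs
    -- orthogonality facts
    have orth₁₁ := (S.E_iff e₁).mp hE₁ m₁ hM₁
    have orth₁₂ := (S.E_iff e₁).mp hE₁ m₂ hM₂
    have orth₂₁ := (S.E_iff e₂).mp hE₂ m₁ hM₁
    have orth₂₂ := (S.E_iff e₂).mp hE₂ m₂ hM₂
    -- h : d ⟶ d₂
    obtain ⟨h, ⟨hh1, hh2⟩, -⟩ := orth₁₂ (m ≫ e₂) m₁ (Limits.terminal.hom_ext _ _)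
    -- u : d₂ ⟶ d
    obtain ⟨u, ⟨hu1, hu2⟩, -⟩ := orth₂₁ s m₂ (Limits.terminal.hom_ext _ _)
    -- h ≫ u = 𝟙 d
    have hhu : h ≫ u = 𝟙 d := by
      obtain ⟨w, -, hwuniq⟩ := orth₁₁ e₁ m₁ (by simp)
      rw [hwuniq (h ≫ u) ⟨by rw [← Category.assoc, hh1, Category.assoc, hu1, hs],
        Limits.terminal.hom_ext _ _⟩,
        hwuniq (𝟙 d) ⟨Category.comp_id _, Limits.terminal.hom_ext _ _⟩]
    -- s ≫ h = e₂
    have hsh : s ≫ h = e₂ := by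
      apply (hm_bij d₂ hM₂').1
      simp only []
      rw [← Category.assoc, hs, hh1]
    -- u ≫ h = 𝟙 d₂
    have huh : u ≫ h = 𝟙 d₂ := by
      obtain ⟨w, -, hwuniq⟩ := orth₂₂ e₂ m₂ (by simp)
      rw [hwuniq (u ≫ h) ⟨by rw [← Category.assoc, hu1, hsh],
        Limits.terminal.hom_ext _ _⟩,
        hwuniq (𝟙 d₂) ⟨Category.comp_id _, Limits.terminal.hom_ext _ _⟩]
    have : IsIso u := ⟨h, huh, hhu⟩
    have hEu : S.E u := S.iso_mem_E u
    have hEs : S.E s := by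
      rw [← hu1]
      exact (h23 e₂ u).1 hE₂ hEu
    have hEm : S.E m := (h23 m s).2.2 hEs (by rwa [hs])
    rw [← hfac]
    exact (h23 e m).1 hE hEm
end

section
/- In the category Cat of small categories and functors, every functor that is bijective on objects is left orthogonal to every fully faithful functor: given functors E : A → B bijective on objects, M : C → D fully faithful, and functors F : A → C, G : B → D with M ∘ F = G ∘ E, there exists a unique functor H : B → C with H ∘ E = F and M ∘ H = G. -/
open CategoryTheory

theorem stmt7 {A B C D : Type*} [Category A] [Category B] [Category C] [Category D]
    (E : A ⥤ B) (M : C ⥤ D)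
    (hE : Function.Bijective E.obj) (hM₁ : M.Full) (hM₂ : M.Faithful)
    (F : A ⥤ C) (G : B ⥤ D) (hsq : E ⋙ G = F ⋙ M) :
    ∃! H : B ⥤ C, E ⋙ H = F ∧ H ⋙ M = G := by
  haveI := hM₁; haveI := hM₂
  let e := Equiv.ofBijective E.obj hE
  have hobj : ∀ a, G.obj (E.obj a) = M.obj (F.obj a) := fun a => Functor.congr_obj hsq a
  have hobj' : ∀ b, M.obj (F.obj (e.symm b)) = G.obj b := fun b => by
    rw [← hobj]; exact congrArg G.obj (e.apply_symm_apply b)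
  let H : B ⥤ C :=
  { obj := fun b => F.obj (e.symm b)
    map := fun {b b'} f => M.preimage (eqToHom (hobj' b) ≫ G.map f ≫ eqToHom (hobj' b').symm)
    map_id := fun b => hM₂.map_injective (by simp)
    map_comp := fun f g => hM₂.map_injective (by simp) }
  have hHmap : ∀ {b b'} (f : b ⟶ b'),
      M.map (H.map f) = eqToHom (hobj' b) ≫ G.map f ≫ eqToHom (hobj' b').symm := by
    intro b b' f; simp [H]
  refine ⟨H, ⟨?_, ?_⟩, ?_⟩
  · apply CategoryTheory.Functor.ext
    · intro a a' f
      apply hM₂.map_injective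
      have := Functor.congr_hom hsq f
      simp only [Functor.comp_map] at this
      simp [hHmap, this, eqToHom_map]
    · intro a; simp [H, e]
  · apply CategoryTheory.Functor.ext
    · intro b b' f; simp [hHmap]
    · intro b; exact hobj' b
  · rintro H' ⟨h1, h2⟩
    apply CategoryTheory.Functor.ext
    · intro b b' f
      apply hM₂.map_injective
      have := Functor.congr_hom h2 f
      simp only [Functor.comp_map] at this
      simp [hHmap, this, eqToHom_map]
    · intro b
      have h3 := Functor.congr_obj h1 (e.symm b)
      simp only [Functor.comp_obj] at h3
      rw [show H.obj b = F.obj (e.symm b) from rfl, ← h3, show E.obj (e.symm b) = b from e.apply_symm_apply b]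
end
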